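/- Let VQ_n = L ⊙ R (n ≥ 2) with L = VQ^0_{n-1} and R = VQ^1_{n-1}, and let x ∈ L and y ∈ R. Then there exists an n-transversal edge u_L u_R with u_L ∈ L and u_R ∈ R such that d_{VQ_n}(x, y) = d_L(x, u_L) + 1 + d_R(u_R, y), where d_L and d_R denote distances in the induced subgraphs L and R. -/

import Mathlib

/-- The relation `I = {(00,00),(01,01),(10,11),(11,10)}` on pairs of bits,
where a pair `(a, b)` records two consecutive bits (higher bit first). -/
def vqCross (p q : Bool × Bool) : Prop :=
  (p = (false, false) ∧ q = (false, false)) ∨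
  (p = (false, true) ∧ q = (false, true)) ∨
  (p = (true, false) ∧ q = (true, true)) ∨
  (p = (true, true) ∧ q = (true, false))

/-- Adjacency in the varietal hypercube `VQ n`.  A vertex is a function
`Fin n → Bool`, the bit `x_k` (1-indexed, `x = x_n x_{n-1} ⋯ x_1`) being
the value at index `k - 1`; the leading bit `x_n` is at index `n - 1`. -/
def vqAdj : (n : ℕ) → (Fin n → Bool) → (Fin n → Bool) → Prop
  | 0, _, _ => False
  | 1, x, y => x ≠ y
  | (n + 2), x, y =>
    if x (Fin.last (n + 1)) = y (Fin.last (n + 1)) then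
      -- both in the same copy of `VQ (n+1)`
      vqAdj (n + 1) (fun i => x i.castSucc) (fun i => y i.castSucc)
    else
      if 3 ∣ (n + 2) then
        (∀ i : Fin (n + 2), i.val < n - 1 → x i = y i) ∧
        vqCross (x ⟨n, by omega⟩, x ⟨n - 1, by omega⟩)
          (y ⟨n, by omega⟩, y ⟨n - 1, by omega⟩)
      else
        ∀ i : Fin (n + 1), x i.castSucc = y i.castSucc

/-- The `n`-dimensional varietal hypercube `VQ_n`. -/
def varietalCube (n : ℕ) : SimpleGraph (Fin n → Bool) :=
  SimpleGraph.fromRel (vqAdj n)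

namespace VQaux
open SimpleGraph

abbrev GG (n : ℕ) := varietalCube n

def pr {m : ℕ} (x : Fin (m+1) → Bool) : Fin m → Bool := fun i => x i.castSucc

/-- the word-level mate map for ambient dimension `m+2`. -/
def phi (m : ℕ) (w : Fin (m+1) → Bool) : Fin (m+1) → Bool :=
  if 3 ∣ (m+2) then
    fun i => if i.val = m - 1 then xor (w i) (w ⟨m, Nat.lt_succ_self m⟩) else w i
  else w

lemma vqCross_iff (a b c d : Bool) :
    vqCross (a, b) (c, d) ↔ (c = a ∧ d = xor b a) := by
  cases a <;> cases b <;> cases c <;> cases d <;> simp [vqCross]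

lemma phi_phi (m : ℕ) (w : Fin (m+1) → Bool) : phi m (phi m w) = w := by
  unfold phi
  split
  · rename_i h3
    have hm : 1 ≤ m := by omega
    funext i
    have hmm : ¬ (m = m - 1) := by omega
    by_cases hi : i.val = m - 1
    · simp only [hi, if_pos rfl, if_neg hmm]
      cases w i <;> cases w ⟨m, Nat.lt_succ_self m⟩ <;> rfl
    · simp [hi]
  · rfl

lemma fromRel_adj' {α} (r : α → α → Prop) (x y : α) :
    (SimpleGraph.fromRel r).Adj x y ↔ x ≠ y ∧ (r x y ∨ r y x) := Iff.rfl

set_option maxHeartbeats 1000000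

lemma vqAdj_eq (m : ℕ) (x y : Fin (m+2) → Bool) :
    vqAdj (m+2) x y = if x (Fin.last (m+1)) = y (Fin.last (m+1)) then
        vqAdj (m+1) (fun i => x i.castSucc) (fun i => y i.castSucc)
      else if 3 ∣ (m + 2) then
        (∀ i : Fin (m + 2), i.val < m - 1 → x i = y i) ∧
        vqCross (x ⟨m, by omega⟩, x ⟨m - 1, by omega⟩)
          (y ⟨m, by omega⟩, y ⟨m - 1, by omega⟩)
      else ∀ i : Fin (m + 1), x i.castSucc = y i.castSucc := rfl

/-- same-copy adjacency -/
lemma adj_same {m : ℕ} (x y : Fin (m+2) → Bool)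
    (h : x (Fin.last (m+1)) = y (Fin.last (m+1))) :
    (GG (m+2)).Adj x y ↔ (GG (m+1)).Adj (pr x) (pr y) := by
  rw [show GG (m+2) = SimpleGraph.fromRel (vqAdj (m+2)) from rfl,
    show GG (m+1) = SimpleGraph.fromRel (vqAdj (m+1)) from rfl, fromRel_adj', fromRel_adj']
  have hne : x ≠ y ↔ pr x ≠ pr y := by
    constructor
    · intro hxy hpr
      apply hxy
      funext i
      refine Fin.lastCases h (fun j => ?_) i
      exact congrFun hpr j
    · intro hpr hxy; exact hpr (by rw [hxy])
  rw [vqAdj_eq m x y, vqAdj_eq m y x]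
  rw [if_pos h, if_pos h.symm]
  exact and_congr hne Iff.rfl

/-- cross adjacency -/
lemma adj_cross {m : ℕ} (x y : Fin (m+2) → Bool)
    (h : x (Fin.last (m+1)) ≠ y (Fin.last (m+1))) :
    (GG (m+2)).Adj x y ↔ pr y = phi m (pr x) := by
  have hne : x ≠ y := fun e => h (by rw [e])
  rw [show GG (m+2) = SimpleGraph.fromRel (vqAdj (m+2)) from rfl, fromRel_adj']
  rw [vqAdj_eq m x y, vqAdj_eq m y x]
  rw [if_neg h, if_neg (Ne.symm h)]
  by_cases h3 : 3 ∣ (m + 2)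
  · have hm : 1 ≤ m := by omega
    rw [if_pos h3, if_pos h3]
    have key : ∀ (u v : Fin (m+2) → Bool),
        ((∀ i : Fin (m + 2), i.val < m - 1 → u i = v i) ∧
          vqCross (u ⟨m, by omega⟩, u ⟨m - 1, by omega⟩)
            (v ⟨m, by omega⟩, v ⟨m - 1, by omega⟩))
        ↔ pr v = phi m (pr u) := by
      intro u v
      rw [vqCross_iff]
      constructor
      · rintro ⟨hall, hc⟩
        funext i
        have hiv : i.val ≤ m := by omega
        simp only [phi, if_pos h3]
        by_cases hi : i.val = m - 1
        · rw [if_pos hi]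
          have hi' : i = (⟨m-1, by omega⟩ : Fin (m+1)) := Fin.ext (by simpa using hi)
          rw [hi']
          exact hc.2
        · rw [if_neg hi]
          by_cases him : i.val = m
          · have hi' : i = (⟨m, Nat.lt_succ_self m⟩ : Fin (m+1)) := Fin.ext (by simpa using him)
            rw [hi']
            exact hc.1
          · have hlt : i.val < m - 1 := by omega
            exact (hall i.castSucc (by simpa using hlt)).symm
      · intro hp
        refine ⟨?_, ?_, ?_⟩
        · intro i hilt
          have hval := congrFun hp (⟨i.val, by omega⟩ : Fin (m+1))
          simp only [phi, if_pos h3] at hval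
          rw [if_neg (show ¬ ((⟨i.val, by omega⟩ : Fin (m+1)).val = m - 1) by simp; omega)]
            at hval
          exact hval.symm
        · have hval := congrFun hp (⟨m, Nat.lt_succ_self m⟩ : Fin (m+1))
          simp only [phi, if_pos h3] at hval
          rw [if_neg (show ¬ ((⟨m, Nat.lt_succ_self m⟩ : Fin (m+1)).val = m - 1) by simp; omega)]
            at hval
          exact hval
        · have hval := congrFun hp (⟨m - 1, by omega⟩ : Fin (m+1))
          simp only [phi, if_pos h3] at hval
          rw [if_pos trivial] at hval
          exact hval
    have symm1 : pr x = phi m (pr y) ↔ pr y = phi m (pr x) := by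
      constructor <;> intro hh
      · rw [hh, phi_phi]
      · rw [hh, phi_phi]
    rw [key x y, key y x, symm1, or_self]
    exact and_iff_right hne
  · rw [if_neg h3, if_neg h3]
    simp only [phi, if_neg h3]
    have e1 : (∀ i : Fin (m + 1), x i.castSucc = y i.castSucc) ↔ pr x = pr y :=
      ⟨fun hh => funext hh, fun hh i => congrFun hh i⟩
    have e2 : (∀ i : Fin (m + 1), y i.castSucc = x i.castSucc) ↔ pr x = pr y :=
      ⟨fun hh => (funext hh).symm, fun hh i => (congrFun hh i).symm⟩
    rw [e1, e2, or_self, eq_comm]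
    exact and_iff_right hne

def mate {m : ℕ} (x : Fin (m+2) → Bool) : Fin (m+2) → Bool :=
  Fin.snoc (phi m (pr x)) (! x (Fin.last (m+1)))

lemma pr_snoc {m : ℕ} (w : Fin (m+1) → Bool) (b : Bool) : pr (Fin.snoc w b) = w :=
  funext fun i => by simp [pr]

lemma snoc_pr {m : ℕ} (x : Fin (m+2) → Bool) :
    Fin.snoc (pr x) (x (Fin.last (m+1))) = x := Fin.snoc_init_self x

lemma mate_last {m : ℕ} (x : Fin (m+2) → Bool) :
    mate x (Fin.last (m+1)) = ! x (Fin.last (m+1)) := Fin.snoc_last _ _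

lemma pr_mate {m : ℕ} (x : Fin (m+2) → Bool) : pr (mate x) = phi m (pr x) :=
  pr_snoc _ _

lemma adj_mate {m : ℕ} (x : Fin (m+2) → Bool) : (GG (m+2)).Adj x (mate x) := by
  rw [adj_cross x (mate x) (by rw [mate_last]; cases x (Fin.last (m+1)) <;> simp)]
  exact pr_mate x

lemma eq_mate_of_adj {m : ℕ} {x y : Fin (m+2) → Bool}
    (h : (GG (m+2)).Adj x y) (hl : x (Fin.last (m+1)) ≠ y (Fin.last (m+1))) :
    y = mate x := by
  rw [adj_cross x y hl] at h
  have hll : y (Fin.last (m+1)) = ! x (Fin.last (m+1)) := by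
    revert hl; cases x (Fin.last (m+1)) <;> cases y (Fin.last (m+1)) <;> simp
  rw [← snoc_pr y, hll, h]
  rfl

lemma adj_flip : ∀ (M : ℕ) (x y : Fin M → Bool) (k : Fin M),
    (∀ i, i ≠ k → x i = y i) → x k ≠ y k → ¬ (3 ∣ (k.val + 1)) → (GG M).Adj x y := by
  intro M
  induction M with
  | zero => intro x y k; exact k.elim0
  | succ N ih =>
    intro x y k hagree hk h3
    have hne : x ≠ y := fun e => hk (congrFun e k)
    cases N with
    | zero =>
      exact ⟨hne, Or.inl hne⟩
    | succ N' =>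
      by_cases hkl : k = Fin.last (N' + 1)
      · subst hkl
        refine ⟨hne, Or.inl ?_⟩
        rw [vqAdj_eq, if_neg hk, if_neg (by simpa using h3)]
        intro i
        exact hagree i.castSucc (Fin.castSucc_lt_last i).ne
      · have hlast : x (Fin.last (N' + 1)) = y (Fin.last (N' + 1)) :=
          hagree _ (Ne.symm hkl)
        rw [adj_same x y hlast]
        have hkv : k.val < N' + 1 := by
          rcases Fin.lt_last_iff_ne_last.mpr hkl with hlt
          exact hlt
        refine ih (pr x) (pr y) ⟨k.val, hkv⟩ ?_ ?_ (by simpa using h3)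
        · intro i hi
          apply hagree
          intro e
          apply hi
          apply Fin.ext
          have := congrArg Fin.val e
          simpa using this
        · have : (Fin.castSucc (⟨k.val, hkv⟩ : Fin (N' + 1))) = k := Fin.ext rfl
          show x (Fin.castSucc ⟨k.val, hkv⟩) ≠ y (Fin.castSucc ⟨k.val, hkv⟩)
          rw [this]
          exact hk

lemma mate_word (m : ℕ) (w : Fin (m+1) → Bool) :
    phi m w = w ∨ (GG (m+1)).Adj w (phi m w) := by
  by_cases h3 : 3 ∣ (m + 2)
  · have hm : 1 ≤ m := by omega
    by_cases hb : w ⟨m, Nat.lt_succ_self m⟩ = false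
    · left
      funext i
      simp only [phi, if_pos h3]
      by_cases hi : i.val = m - 1
      · rw [if_pos hi, hb, Bool.xor_false]
      · rw [if_neg hi]
    · right
      have hbt : w ⟨m, Nat.lt_succ_self m⟩ = true := by
        cases h : w ⟨m, Nat.lt_succ_self m⟩ <;> simp_all
      refine adj_flip (m+1) w (phi m w) ⟨m - 1, by omega⟩ ?_ ?_ ?_
      · intro i hi
        simp only [phi, if_pos h3]
        rw [if_neg (fun e => hi (Fin.ext (by simpa using e)))]
      · simp only [phi, if_pos h3]
        rw [if_pos trivial, hbt]
        cases w ⟨m - 1, by omega⟩ <;> simp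
      · show ¬ (3 ∣ ((⟨m - 1, by omega⟩ : Fin (m+1)).val + 1))
        show ¬ (3 ∣ (m - 1 + 1))
        omega
  · left
    simp only [phi, if_neg h3]

open SimpleGraph.Walk in
lemma split {V : Type*} {G : SimpleGraph V} (P : V → Prop) :
    ∀ {x y : V} (W : G.Walk x y), P x → ¬ P y →
    ∃ (u v : V) (W1 : G.Walk x u) (W2 : G.Walk v y),
      P u ∧ ¬ P v ∧ G.Adj u v ∧ (∀ z ∈ W1.support, P z) ∧
      W1.length + 1 + W2.length ≤ W.length := by
  intro x y W
  induction W with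
  | nil => intro hx hy; exact absurd hx hy
  | @cons a b c h p ih =>
    intro hx hy
    by_cases hz : P b
    · obtain ⟨u, v, W1, W2, h1, h2, h3, h4, h5⟩ := ih hz hy
      refine ⟨u, v, cons h W1, W2, h1, h2, h3, ?_, ?_⟩
      · intro z hzz
        rw [support_cons] at hzz
        rcases List.mem_cons.mp hzz with rfl | hzz
        · exact hx
        · exact h4 z hzz
      · simp only [length_cons]
        omega
    · exact ⟨a, b, nil, p, hx, hz, h, by simp [hx], by simp [Nat.add_comm]⟩

open SimpleGraph.Walk in
lemma proj_walk {m : ℕ} (b : Bool) :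
    ∀ {x y : Fin (m+2) → Bool} (W : (GG (m+2)).Walk x y),
      (∀ z ∈ W.support, z (Fin.last (m+1)) = b) →
      ∃ Wp : (GG (m+1)).Walk (pr x) (pr y), Wp.length = W.length := by
  intro x y W
  induction W with
  | nil => exact fun _ => ⟨nil, rfl⟩
  | @cons a c d h p ih =>
    intro hsup
    have ha : a (Fin.last (m+1)) = b := hsup a (by simp)
    have hc : c (Fin.last (m+1)) = b := hsup c (by simp)
    obtain ⟨Wp, hWp⟩ := ih (fun z hz => hsup z (by simp [hz]))
    have hadj : (GG (m+1)).Adj (pr a) (pr c) := (adj_same a c (ha.trans hc.symm)).mp h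
    exact ⟨cons hadj Wp, by simp [hWp]⟩

open SimpleGraph.Walk in
lemma lift_walk {m : ℕ} (b : Bool) :
    ∀ {w w' : Fin (m+1) → Bool} (Wp : (GG (m+1)).Walk w w'),
      ∃ W : (GG (m+2)).Walk (Fin.snoc w b) (Fin.snoc w' b),
        W.length = Wp.length ∧ ∀ z ∈ W.support, z (Fin.last (m+1)) = b := by
  intro w w' Wp
  induction Wp with
  | nil =>
    refine ⟨nil, rfl, ?_⟩
    intro z hz
    rw [support_nil, List.mem_singleton] at hz
    subst hz
    exact Fin.snoc_last _ _
  | @cons a c d h p ih =>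
    obtain ⟨W, hlen, hsup⟩ := ih
    have hadj : (GG (m+2)).Adj (Fin.snoc a b) (Fin.snoc c b) := by
      rw [adj_same _ _ (by rw [Fin.snoc_last, Fin.snoc_last]), pr_snoc, pr_snoc]
      exact h
    refine ⟨cons hadj W, by simp [hlen], ?_⟩
    intro z hz
    rw [support_cons] at hz
    rcases List.mem_cons.mp hz with rfl | hz
    · exact Fin.snoc_last _ _
    · exact hsup z hz

open SimpleGraph.Walk in
lemma mate_transport {m : ℕ} {z aL : Fin (m+2) → Bool} (W1 : (GG (m+2)).Walk z aL)
    (hsup : ∀ v ∈ W1.support, v (Fin.last (m+1)) = false) :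
    ∃ W3 : (GG (m+2)).Walk (mate z) (mate aL),
      (∀ v ∈ W3.support, v (Fin.last (m+1)) = true) ∧ W3.length ≤ W1.length + 2 := by
  obtain ⟨Wp, hWp⟩ := proj_walk false W1 hsup
  -- word-level walk from phi (pr z) to phi (pr aL)
  have Q1 : ∃ Q : (GG (m+1)).Walk (phi m (pr z)) (pr z), Q.length ≤ 1 := by
    rcases mate_word m (pr z) with he | ha
    · exact ⟨nil.copy he.symm rfl, by simp⟩
    · exact ⟨cons ha.symm nil, by simp⟩
  have Q2 : ∃ Q : (GG (m+1)).Walk (pr aL) (phi m (pr aL)), Q.length ≤ 1 := by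
    rcases mate_word m (pr aL) with he | ha
    · exact ⟨nil.copy rfl he.symm, by simp⟩
    · exact ⟨cons ha nil, by simp⟩
  obtain ⟨q1, hq1⟩ := Q1
  obtain ⟨q2, hq2⟩ := Q2
  obtain ⟨W, hWlen, hWsup⟩ := lift_walk (m := m) true (q1.append (Wp.append q2))
  have hz : Fin.snoc (phi m (pr z)) true = mate z := by
    have : (! z (Fin.last (m+1))) = true := by rw [hsup z (by simp)]; rfl
    rw [mate, this]
  have haL : Fin.snoc (phi m (pr aL)) true = mate aL := by
    have : (! aL (Fin.last (m+1))) = true := by rw [hsup aL (by simp)]; rfl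
    rw [mate, this]
  refine ⟨W.copy hz haL, ?_, ?_⟩
  · intro v hv
    rw [support_copy] at hv
    exact hWsup v hv
  · rw [length_copy, hWlen]
    simp only [length_append]
    omega

open SimpleGraph.Walk in
lemma iso_R {m : ℕ} : ∀ (k : ℕ) {u y : Fin (m+2) → Bool} (W : (GG (m+2)).Walk u y),
    W.length ≤ k → u (Fin.last (m+1)) = true → y (Fin.last (m+1)) = true →
    ∃ W' : (GG (m+2)).Walk u y,
      (∀ z ∈ W'.support, z (Fin.last (m+1)) = true) ∧ W'.length ≤ W.length := by
  intro k
  induction k with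
  | zero =>
    intro u y W hlen hu hy
    cases W with
    | nil =>
      refine ⟨nil, ?_, le_rfl⟩
      intro z hz
      rw [support_nil, List.mem_singleton] at hz
      subst hz; exact hu
    | cons h p => simp [length_cons] at hlen
  | succ k ih =>
    intro u y W hlen hu hy
    cases W with
    | nil =>
      refine ⟨nil, ?_, le_rfl⟩
      intro z hz
      rw [support_nil, List.mem_singleton] at hz
      subst hz; exact hu
    | @cons _ c _ h p =>
      rw [length_cons] at hlen
      by_cases hc : c (Fin.last (m+1)) = true
      · obtain ⟨p', hp's, hp'l⟩ := ih p (by omega) hc hy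
        refine ⟨cons h p', ?_, by simp [length_cons]; omega⟩
        intro z hz
        rw [support_cons] at hz
        rcases List.mem_cons.mp hz with rfl | hz
        · exact hu
        · exact hp's z hz
      · have hcf : c (Fin.last (m+1)) = false := by simpa using hc
        have hcross : c (Fin.last (m+1)) ≠ u (Fin.last (m+1)) := by
          rw [hcf, hu]; simp
        have humate : u = mate c := eq_mate_of_adj h.symm hcross
        obtain ⟨aL, aR, W1, W2, h1, h2, h3, h4, h5⟩ :=
          split (fun v => v (Fin.last (m+1)) = false) p hcf (show ¬ (y (Fin.last (m+1)) = false) by rw [hy]; simp)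
        have haR : aR (Fin.last (m+1)) = true := by simpa using h2
        have haRmate : aR = mate aL := eq_mate_of_adj h3 (by rw [h1, haR]; simp)
        obtain ⟨W3, hW3s, hW3l⟩ := mate_transport W1 h4
        obtain ⟨W2', hW2's, hW2'l⟩ := ih W2 (by omega) haR hy
        refine ⟨((W3.copy humate.symm haRmate.symm).append W2'), ?_, ?_⟩
        · intro z hz
          rw [support_append] at hz
          rcases List.mem_append.mp hz with hz | hz
          · rw [support_copy] at hz
            exact hW3s z hz
          · exact hW2's z (List.mem_of_mem_tail hz)
        · rw [length_append, length_copy, length_cons]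
          omega

open SimpleGraph.Walk in
lemma precon : ∀ (M : ℕ), (GG M).Preconnected := by
  intro M
  induction M with
  | zero =>
    intro x y
    have : x = y := funext fun i => i.elim0
    rw [this]
  | succ N ih =>
    cases N with
    | zero =>
      intro x y
      by_cases h : x = y
      · rw [h]
      · exact SimpleGraph.Adj.reachable (show (GG 1).Adj x y from ⟨h, Or.inl h⟩)
    | succ N' =>
      intro x y
      by_cases h : x (Fin.last (N' + 1)) = y (Fin.last (N' + 1))
      · obtain ⟨Wp⟩ := ih (pr x) (pr y)
        obtain ⟨W, _, _⟩ := lift_walk (x (Fin.last (N' + 1))) Wp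
        have e1 : Fin.snoc (pr x) (x (Fin.last (N' + 1))) = x := snoc_pr x
        have e2 : Fin.snoc (pr y) (x (Fin.last (N' + 1))) = y := by
          rw [h]; exact snoc_pr y
        exact ⟨W.copy e1 e2⟩
      · have h1 : (GG (N' + 2)).Reachable x (mate x) := (adj_mate x).reachable
        have h2 : mate x (Fin.last (N' + 1)) = y (Fin.last (N' + 1)) := by
          rw [mate_last]
          revert h
          cases x (Fin.last (N' + 1)) <;> cases y (Fin.last (N' + 1)) <;> simp
        refine h1.trans ?_
        obtain ⟨Wp⟩ := ih (pr (mate x)) (pr y)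
        obtain ⟨W, _, _⟩ := lift_walk (mate x (Fin.last (N' + 1))) Wp
        have e1 : Fin.snoc (pr (mate x)) (mate x (Fin.last (N' + 1))) = mate x :=
          snoc_pr _
        have e2 : Fin.snoc (pr y) (mate x (Fin.last (N' + 1))) = y := by
          rw [h2]; exact snoc_pr y
        exact ⟨W.copy e1 e2⟩

open SimpleGraph.Walk in
lemma toInduce {V : Type*} {G : SimpleGraph V} {S : Set V} :
    ∀ {a b : V} (W : G.Walk a b) (_ : ∀ z ∈ W.support, z ∈ S)
      (ha : a ∈ S) (hb : b ∈ S),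
      ∃ W' : (G.induce S).Walk ⟨a, ha⟩ ⟨b, hb⟩, W'.length = W.length := by
  intro a b W
  induction W with
  | nil => exact fun _ _ _ => ⟨nil, rfl⟩
  | @cons a c d h p ih =>
    intro hsup ha hd
    have hc : c ∈ S := hsup c (by simp)
    obtain ⟨W', hW'⟩ := ih (fun z hz => hsup z (by simp [hz])) hc hd
    have hadj : (G.induce S).Adj ⟨a, ha⟩ ⟨c, hc⟩ := h
    exact ⟨cons hadj W', by simp [hW']⟩

open SimpleGraph.Walk in
lemma fromInduce {V : Type*} {G : SimpleGraph V} {S : Set V} :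
    ∀ {a b : S} (W' : (G.induce S).Walk a b),
      ∃ W : G.Walk a.1 b.1, W.length = W'.length := by
  intro a b W'
  induction W' with
  | nil => exact ⟨nil, rfl⟩
  | @cons a c d h p ih =>
    obtain ⟨W, hW⟩ := ih
    exact ⟨cons h W, by show W.length + 1 = p.length + 1; rw [hW]⟩

end VQaux

/-- Let `VQ_n = L ⊙ R` (`n ≥ 2`), `x ∈ L`, `y ∈ R`.  Then there is an
`n`-transversal edge `u_L u_R` with
`d_{VQ_n}(x, y) = d_L(x, u_L) + 1 + d_R(u_R, y)`. -/
theorem stmt12 (n : ℕ) (hn : 2 ≤ n) (x y : Fin n → Bool)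
    (hx : x ⟨n - 1, by omega⟩ = false) (hy : y ⟨n - 1, by omega⟩ = true) :
    ∃ (uL uR : Fin n → Bool) (huL : uL ⟨n - 1, by omega⟩ = false)
      (huR : uR ⟨n - 1, by omega⟩ = true),
      (varietalCube n).Adj uL uR ∧
      (varietalCube n).dist x y =
        ((varietalCube n).induce {v : Fin n → Bool | v ⟨n - 1, by omega⟩ = false}).dist
            ⟨x, hx⟩ ⟨uL, huL⟩ + 1 +
        ((varietalCube n).induce {v : Fin n → Bool | v ⟨n - 1, by omega⟩ = true}).dist
            ⟨uR, huR⟩ ⟨y, hy⟩ := by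
  obtain ⟨m, rfl⟩ : ∃ m, n = m + 2 := ⟨n - 2, by omega⟩
  have hx' : x (Fin.last (m+1)) = false := hx
  have hy' : y (Fin.last (m+1)) = true := hy
  obtain ⟨W, hWlen⟩ :=
    SimpleGraph.Reachable.exists_walk_length_eq_dist (VQaux.precon (m+2) x y)
  obtain ⟨uL, uR, W1, W2, h1, h2, h3, h4, h5⟩ :=
    VQaux.split (fun v => v (Fin.last (m+1)) = false) W hx'
      (show ¬ (y (Fin.last (m+1)) = false) by rw [hy']; simp)
  have huR : uR (Fin.last (m+1)) = true := by simpa using h2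
  obtain ⟨W2', hW2's, hW2'l⟩ := VQaux.iso_R W2.length W2 le_rfl huR hy'
  obtain ⟨IL, hIL⟩ := VQaux.toInduce (S := {v : Fin (m+2) → Bool | v (Fin.last (m+1)) = false})
    W1 h4 hx' h1
  obtain ⟨IR, hIR⟩ := VQaux.toInduce (S := {v : Fin (m+2) → Bool | v (Fin.last (m+1)) = true})
    W2' hW2's huR hy'
  refine ⟨uL, uR, h1, huR, h3, ?_⟩
  -- lower bound : dist ≥ dL + 1 + dR
  have a1 : ((varietalCube (m+2)).induce
      {v : Fin (m+2) → Bool | v (Fin.last (m+1)) = false}).dist ⟨x, hx'⟩ ⟨uL, h1⟩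
      ≤ W1.length := (SimpleGraph.dist_le IL).trans (le_of_eq hIL)
  have a2 : ((varietalCube (m+2)).induce
      {v : Fin (m+2) → Bool | v (Fin.last (m+1)) = true}).dist ⟨uR, huR⟩ ⟨y, hy'⟩
      ≤ W2'.length := (SimpleGraph.dist_le IR).trans (le_of_eq hIR)
  -- upper bound : dist ≤ dL + 1 + dR
  obtain ⟨PL, hPL⟩ := SimpleGraph.Reachable.exists_walk_length_eq_dist ⟨IL⟩
  obtain ⟨PR, hPR⟩ := SimpleGraph.Reachable.exists_walk_length_eq_dist ⟨IR⟩
  obtain ⟨QL, hQL⟩ := VQaux.fromInduce PL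
  obtain ⟨QR, hQR⟩ := VQaux.fromInduce PR
  have b1 := SimpleGraph.dist_le ((QL.concat h3).append QR)
  rw [SimpleGraph.Walk.length_append, SimpleGraph.Walk.length_concat, hQL, hQR,
    hPL, hPR] at b1
  have c1 : W1.length + 1 + W2.length ≤ (varietalCube (m+2)).dist x y := by
    rw [← hWlen]; exact h5
  refine Nat.le_antisymm b1 ?_
  refine le_trans ?_ c1
  exact Nat.add_le_add (Nat.add_le_add_right a1 1) (a2.trans hW2'l)
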